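/- Let p be a prime and let R be a noncommutative (not necessarily unital) ring of order p². Then |Cent(R)| = p + 2. -/

import Mathlib

/-- The centralizer of `r` in a (not necessarily unital) ring: `{s | r*s = s*r}`. -/
def rCentralizer {R : Type*} [NonUnitalRing R] (r : R) : Set R := {s | r * s = s * r}

/-- The set of all centralizers of elements of `R`. -/
def Cent (R : Type*) [NonUnitalRing R] : Set (Set R) :=
  Set.range (fun r : R => rCentralizer r)

/-- The center of a (not necessarily unital) ring, as a set. -/
def rCenter (R : Type*) [NonUnitalRing R] : Set R := {s | ∀ r : R, r * s = s * r}

section Aux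

variable {R : Type*} [NonUnitalRing R]

/-- The centralizer of `r` as an additive subgroup. -/
def centAdd (r : R) : AddSubgroup R where
  carrier := rCentralizer r
  zero_mem' := by simp [rCentralizer]
  add_mem' := by
    intro a b ha hb
    simp only [rCentralizer, Set.mem_setOf_eq] at *
    rw [mul_add, add_mul, ha, hb]
  neg_mem' := by
    intro a ha
    simp only [rCentralizer, Set.mem_setOf_eq] at *
    rw [mul_neg, neg_mul, ha]

lemma zmult_le_centAdd (r : R) : AddSubgroup.zmultiples r ≤ centAdd r := by
  rintro x ⟨n, rfl⟩
  show r * (n • r) = (n • r) * r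
  rw [mul_smul_comm, smul_mul_assoc]

end Aux

/-- A noncommutative ring of order `p²` has exactly `p + 2` centralizers. -/
theorem cent_of_card_p_sq (p : ℕ) (hp : p.Prime) (R : Type*) [NonUnitalRing R] [Finite R]
    (hcard : Nat.card R = p ^ 2) (h : ∃ x y : R, x * y ≠ y * x) :
    (Cent R).ncard = p + 2 := by
  classical
  obtain ⟨x, y, hxy⟩ := h
  have hp1 : 1 < p := hp.one_lt
  -- Step 1: every nonzero element has additive order p
  have hord : ∀ r : R, r ≠ 0 → addOrderOf r = p := by
    intro r hr
    have hd : addOrderOf r ∣ p ^ 2 := hcard ▸ addOrderOf_dvd_natCard r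
    obtain ⟨k, hk, he⟩ := (Nat.dvd_prime_pow hp).mp hd
    have hk2 : k ≠ 2 := by
      rintro rfl
      have htop : AddSubgroup.zmultiples r = ⊤ :=
        AddSubgroup.eq_top_of_card_eq _ (by rw [Nat.card_zmultiples, he, hcard])
      have hxm : x ∈ AddSubgroup.zmultiples r := by rw [htop]; trivial
      have hym : y ∈ AddSubgroup.zmultiples r := by rw [htop]; trivial
      obtain ⟨m, hm⟩ := hxm
      obtain ⟨n, hn⟩ := hym
      apply hxy
      rw [← hm, ← hn, smul_mul_assoc, smul_mul_assoc, mul_smul_comm, mul_smul_comm,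
        smul_comm]
    have hk0 : k ≠ 0 := by
      rintro rfl
      rw [pow_zero, AddMonoid.addOrderOf_eq_one_iff] at he
      exact hr he
    have : k = 1 := by omega
    rw [this, pow_one] at he
    exact he
  -- Step 2: the centralizer of a noncentral element is the line through it
  have hcent : ∀ r : R, (∃ s : R, r * s ≠ s * r) → AddSubgroup.zmultiples r = centAdd r := by
    rintro r ⟨s, hs⟩
    have hr0 : r ≠ 0 := by rintro rfl; exact hs (by rw [zero_mul, mul_zero])
    have hle := zmult_le_centAdd r
    have hcm : Nat.card (AddSubgroup.zmultiples r) = p := by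
      rw [Nat.card_zmultiples, hord r hr0]
    have hdvd : Nat.card (centAdd r) ∣ p ^ 2 := hcard ▸ AddSubgroup.card_addSubgroup_dvd_card _
    have hne : Nat.card (centAdd r) ≠ p ^ 2 := by
      intro hEq
      have htop : centAdd r = ⊤ := AddSubgroup.eq_top_of_card_eq _ (by rw [hEq, hcard])
      have hsmem : s ∈ centAdd r := by rw [htop]; trivial
      exact hs hsmem
    have hpd : p ∣ Nat.card (centAdd r) := hcm ▸ AddSubgroup.card_dvd_of_le hle
    obtain ⟨k, hk, he⟩ := (Nat.dvd_prime_pow hp).mp hdvd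
    have hk0 : k ≠ 0 := by
      rintro rfl
      rw [pow_zero] at he
      rw [he] at hpd
      exact absurd (Nat.le_of_dvd one_pos hpd) (by omega)
    have hk2 : k ≠ 2 := by rintro rfl; exact hne he
    have hkeq : k = 1 := by omega
    rw [hkeq, pow_one] at he
    exact AddSubgroup.eq_of_le_of_card_ge hle (by rw [he, hcm])
  -- Step 3: the center is trivial
  have hxne : x ≠ 0 := by rintro rfl; exact hxy (by rw [zero_mul, mul_zero])
  have hyne : y ≠ 0 := by rintro rfl; exact hxy (by rw [zero_mul, mul_zero])
  have hcx : AddSubgroup.zmultiples x = centAdd x := hcent x ⟨y, hxy⟩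
  have hcy : AddSubgroup.zmultiples y = centAdd y := hcent y ⟨x, fun hc => hxy hc.symm⟩
  have hxyne : AddSubgroup.zmultiples x ≠ AddSubgroup.zmultiples y := by
    intro hEq
    have hy : y ∈ AddSubgroup.zmultiples x := by rw [hEq]; exact AddSubgroup.mem_zmultiples y
    rw [hcx] at hy
    exact hxy hy
  have hinf : AddSubgroup.zmultiples x ⊓ AddSubgroup.zmultiples y = ⊥ := by
    have hcmx : Nat.card (AddSubgroup.zmultiples x) = p := by
      rw [Nat.card_zmultiples, hord x hxne]
    have hcmy : Nat.card (AddSubgroup.zmultiples y) = p := by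
      rw [Nat.card_zmultiples, hord y hyne]
    have hd : Nat.card ↥(AddSubgroup.zmultiples x ⊓ AddSubgroup.zmultiples y) ∣ p :=
      hcmx ▸ AddSubgroup.card_dvd_of_le inf_le_left
    rcases (Nat.dvd_prime hp).mp hd with h1 | h1
    · exact AddSubgroup.eq_bot_of_card_eq _ h1
    · exfalso
      apply hxyne
      have e1 : AddSubgroup.zmultiples x ⊓ AddSubgroup.zmultiples y = AddSubgroup.zmultiples x :=
        AddSubgroup.eq_of_le_of_card_ge inf_le_left (by rw [h1, hcmx])
      have e2 : AddSubgroup.zmultiples x ⊓ AddSubgroup.zmultiples y = AddSubgroup.zmultiples y :=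
        AddSubgroup.eq_of_le_of_card_ge inf_le_right (by rw [h1, hcmy])
      rw [← e1, e2]
  have hcentertriv : ∀ z : R, (∀ r : R, r * z = z * r) → z = 0 := by
    intro z hz
    have h1 : z ∈ AddSubgroup.zmultiples x := by rw [hcx]; exact hz x
    have h2 : z ∈ AddSubgroup.zmultiples y := by rw [hcy]; exact hz y
    have : z ∈ (⊥ : AddSubgroup R) := by
      rw [← hinf]; exact AddSubgroup.mem_inf.mpr ⟨h1, h2⟩
    exact AddSubgroup.mem_bot.mp this
  -- Step 4: centralizer of every nonzero element is its line
  have hnc : ∀ r : R, r ≠ 0 → rCentralizer r = ((AddSubgroup.zmultiples r : AddSubgroup R) : Set R) := by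
    intro r hr
    have hex : ∃ s : R, r * s ≠ s * r := by
      by_contra hcon
      push_neg at hcon
      exact hr (hcentertriv r fun s => (hcon s).symm)
    have heq := hcent r hex
    calc rCentralizer r = ((centAdd r : AddSubgroup R) : Set R) := rfl
      _ = ((AddSubgroup.zmultiples r : AddSubgroup R) : Set R) := by rw [heq]
  have h0univ : rCentralizer (0 : R) = Set.univ := by
    ext s; simp [rCentralizer]
  -- The counting setup
  haveI := Fintype.ofFinite R
  set L : R → Set R := fun r => ((AddSubgroup.zmultiples r : AddSubgroup R) : Set R) with hL
  set s : Finset R := Finset.univ.erase 0 with hs_def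
  have hscard : s.card = p ^ 2 - 1 := by
    rw [hs_def, Finset.card_erase_of_mem (Finset.mem_univ 0), Finset.card_univ,
      ← Nat.card_eq_fintype_card, hcard]
  have hLcard : ∀ r : R, r ≠ 0 → (L r).ncard = p := by
    intro r hr
    rw [← Nat.card_coe_set_eq]
    have : Nat.card ↥(L r) = Nat.card ↥(AddSubgroup.zmultiples r) := rfl
    rw [this, Nat.card_zmultiples, hord r hr]
  -- line equality criterion
  have hlines : ∀ a r : R, a ≠ 0 → a ∈ AddSubgroup.zmultiples r → r ≠ 0 → L a = L r := by
    intro a r ha hmem hr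
    have hle : AddSubgroup.zmultiples a ≤ AddSubgroup.zmultiples r :=
      AddSubgroup.zmultiples_le.mpr hmem
    have : AddSubgroup.zmultiples a = AddSubgroup.zmultiples r :=
      AddSubgroup.eq_of_le_of_card_ge hle
        (by rw [Nat.card_zmultiples, Nat.card_zmultiples, hord a ha, hord r hr])
    rw [hL]; simp only []; rw [this]
  -- fibers of L over s
  have hfiber : ∀ r ∈ s, (s.filter fun a => L a = L r).card = p - 1 := by
    intro r hr
    have hr0 : r ≠ 0 := Finset.ne_of_mem_erase hr
    have hset : ((s.filter fun a => L a = L r : Finset R) : Set R) = (L r) \ {0} := by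
      ext a
      simp only [Finset.coe_filter, Set.mem_setOf_eq, hs_def, Finset.mem_erase,
        Finset.mem_univ, and_true, Set.mem_diff, Set.mem_singleton_iff]
      constructor
      · rintro ⟨ha0, haL⟩
        refine ⟨?_, ha0⟩
        rw [← haL]
        exact AddSubgroup.mem_zmultiples a
      · rintro ⟨haL, ha0⟩
        exact ⟨ha0, hlines a r ha0 haL hr0⟩
    have := Set.ncard_coe_finset (s.filter fun a => L a = L r)
    rw [hset] at this
    rw [← this, Set.ncard_diff_singleton_of_mem (AddSubgroup.zero_mem _),
      hLcard r hr0]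
  -- the number of lines
  have hsum : s.card = ∑ b ∈ s.image L, (s.filter fun a => L a = b).card :=
    Finset.card_eq_sum_card_fiberwise fun a ha => Finset.mem_image_of_mem L ha
  have hconst : ∀ b ∈ s.image L, (s.filter fun a => L a = b).card = p - 1 := by
    intro b hb
    obtain ⟨r, hr, rfl⟩ := Finset.mem_image.mp hb
    exact hfiber r hr
  rw [Finset.sum_congr rfl hconst, Finset.sum_const, smul_eq_mul, hscard] at hsum
  have hkey : (p + 1) * (p - 1) = p ^ 2 - 1 := by
    obtain ⟨q, rfl⟩ : ∃ q, p = q + 1 := ⟨p - 1, by omega⟩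
    simp only [Nat.add_sub_cancel]
    symm
    exact Nat.sub_eq_of_eq_add (by ring)
  have himg : (s.image L).card = p + 1 := by
    have hmm : (s.image L).card * (p - 1) = (p + 1) * (p - 1) := by
      rw [← hsum, hkey]
    exact Nat.eq_of_mul_eq_mul_right (by omega) hmm
  -- description of Cent R
  have hCent : Cent R = insert Set.univ ((s.image L : Finset (Set R)) : Set (Set R)) := by
    ext S
    simp only [Cent, Set.mem_range, Set.mem_insert_iff, Finset.coe_image, Set.mem_image,
      Finset.mem_coe, hs_def, Finset.mem_erase, Finset.mem_univ, and_true]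
    constructor
    · rintro ⟨r, rfl⟩
      by_cases hr : r = 0
      · subst hr; exact Or.inl h0univ
      · exact Or.inr ⟨r, hr, (hnc r hr).symm⟩
    · rintro (rfl | ⟨r, hr, rfl⟩)
      · exact ⟨0, h0univ⟩
      · exact ⟨r, hnc r hr⟩
  have hnotmem : Set.univ ∉ ((s.image L : Finset (Set R)) : Set (Set R)) := by
    intro hmem
    simp only [Finset.coe_image, Set.mem_image, Finset.mem_coe, hs_def, Finset.mem_erase,
      Finset.mem_univ, and_true] at hmem
    obtain ⟨r, hr, hEq⟩ := hmem
    have h1 : (L r).ncard = p := hLcard r hr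
    rw [hEq, Set.ncard_univ, hcard] at h1
    nlinarith [hp.two_le]
  rw [hCent, Set.ncard_insert_of_notMem hnotmem (Finset.finite_toSet _),
    Set.ncard_coe_finset, himg]
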